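/- Let W be a word over a linearly ordered finite alphabet, and let n, d be positive integers. If W contains n pairwise disjoint occurrences of the same subword u, where u has length n·d, then either W is n-divisible or W contains a subword of the form v^d for some nonempty word v. -/

import Mathlib

open List


set_option linter.unusedSectionVars false
set_option linter.unusedVariables false

section Aux

variable {α : Type*} [LinearOrder α]

/-- `x` is lexicographically smaller than `y`, decided at a letter. -/
def LtAt (x y : List α) : Prop :=
  ∃ (c : List α) (a b : α) (s t : List α), a < b ∧ x = c ++ a :: s ∧ y = c ++ b :: t

lemma lex_middle (c : List α) {a b : α} (hab : a < b) (s t : List α) :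
    (c ++ a :: s) < (c ++ b :: t) := by
  show List.Lex (· < ·) _ _
  induction c with
  | nil => exact List.Lex.rel hab
  | cons e c ih => exact List.Lex.cons ih

lemma lt_of_ltAt_prefix {x y X Y : List α} (h : LtAt x y) (hx : x <+: X) (hy : y <+: Y) :
    X < Y := by
  obtain ⟨c, a, b, s, t, hab, rfl, rfl⟩ := h
  obtain ⟨s', rfl⟩ := hx
  obtain ⟨t', rfl⟩ := hy
  have e1 : (c ++ a :: s) ++ s' = c ++ a :: (s ++ s') := by simp
  have e2 : (c ++ b :: t) ++ t' = c ++ b :: (t ++ t') := by simp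
  rw [e1, e2]
  exact lex_middle c hab _ _

lemma ltAt_total : ∀ (x y : List α), LtAt x y ∨ LtAt y x ∨ x <+: y ∨ y <+: x
  | [], y => .inr <| .inr <| .inl (nil_prefix)
  | a :: x, [] => .inr <| .inr <| .inr (nil_prefix)
  | a :: x, b :: y => by
    rcases lt_trichotomy a b with hab | rfl | hab
    · exact .inl ⟨[], a, b, x, y, hab, rfl, rfl⟩
    · rcases ltAt_total x y with h | h | h | h
      · obtain ⟨c, a', b', s, t, h1, rfl, rfl⟩ := h
        exact .inl ⟨a :: c, a', b', s, t, h1, rfl, rfl⟩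
      · obtain ⟨c, a', b', s, t, h1, rfl, rfl⟩ := h
        exact .inr <| .inl ⟨a :: c, a', b', s, t, h1, rfl, rfl⟩
      · obtain ⟨w, rfl⟩ := h
        exact .inr <| .inr <| .inl ⟨w, rfl⟩
      · obtain ⟨w, rfl⟩ := h
        exact .inr <| .inr <| .inr ⟨w, rfl⟩
    · exact .inr <| .inl ⟨[], b, a, y, x, hab, rfl, rfl⟩

/-- A word with period `t` (witnessed by `z.drop t <+: z`) and length at least `d*t`
has the `d`-th power of its prefix of length `t` as a prefix. -/
lemma pow_prefix_of_period : ∀ (d : ℕ) (z : List α) (t : ℕ), 0 < t → z.drop t <+: z →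
    d * t ≤ z.length → (List.replicate d (z.take t)).flatten <+: z := by
  intro d
  induction d with
  | zero => intro z t _ _ _; simp
  | succ d ih =>
    intro z t ht hp hl
    rcases Nat.eq_zero_or_pos d with rfl | hd
    · simpa using (take_prefix t z)
    · have h2t : 2 * t ≤ z.length := le_trans (by nlinarith) hl
      have hdrop_eq : z.drop t = z.take (z.length - t) := by
        have := prefix_iff_eq_take.mp hp
        simpa using this
      have hp' : (z.drop t).drop t <+: z.drop t := hp.drop t
      have hl' : d * t ≤ (z.drop t).length := by
        rw [length_drop]
        have : (d + 1) * t = d * t + t := by ring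
        omega
      have htake : (z.drop t).take t = z.take t :=
        (hp.take t).eq_of_length (by simp only [length_take, length_drop]; omega)
      have hih := ih (z.drop t) t ht hp' hl'
      rw [htake] at hih
      obtain ⟨w, hw⟩ := hih
      refine ⟨w, ?_⟩
      have : (List.replicate (d+1) (z.take t)).flatten
          = z.take t ++ (List.replicate d (z.take t)).flatten := by
        rw [replicate_succ, flatten_cons]
      rw [this, append_assoc, hw, take_append_drop]

/-- Build the decreasing factorization of `W.drop c` from a chain of cut points with
designated comparable prefixes. -/
lemma build (W : List α) :
    ∀ (L : List (ℕ × List α)) (c : ℕ) (x : List α),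
      ((c, x) :: L).Chain' (fun e f => e.1 + e.2.length ≤ f.1 ∧ LtAt f.2 e.2) →
      (∀ e ∈ (c, x) :: L, e.2 ≠ [] ∧ e.2 <+: W.drop e.1) →
      ∃ (h : List α) (us : List (List α)),
        (h :: us).length = L.length + 1 ∧ (∀ w ∈ h :: us, w ≠ []) ∧
        (h :: us).Chain' (fun a b => b < a) ∧ W.drop c = (h :: us).flatten ∧ x <+: h := by
  intro L
  induction L with
  | nil =>
    intro c x _ hmem
    obtain ⟨hxne, hxp⟩ := hmem _ mem_cons_self
    have hne : W.drop c ≠ [] := by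
      intro h
      exact hxne (prefix_nil.mp (h ▸ hxp))
    exact ⟨W.drop c, [], rfl, by simpa using hne, isChain_singleton _, by simp, hxp⟩
  | cons f L ih =>
    intro c x hch hmem
    obtain ⟨c', x'⟩ := f
    have hrel : c + x.length ≤ c' ∧ LtAt x' x := (isChain_cons_cons.mp hch).1
    obtain ⟨h', us, hlen, hne, hch', hflat, hpre⟩ :=
      ih c' x' (isChain_cons_cons.mp hch).2 (fun e he => hmem e (mem_cons_of_mem _ he))
    obtain ⟨hxne, hxp⟩ := hmem _ mem_cons_self
    have hxlen : 0 < x.length := length_pos_iff.mpr hxne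
    set P : List α := (W.drop c).take (c' - c) with hP
    have hxP : x <+: P := by
      rw [hP, prefix_take_iff]
      exact ⟨hxp, by omega⟩
    have hPne : P ≠ [] := by
      intro h
      exact hxne (prefix_nil.mp (h ▸ hxP))
    have hdrop : W.drop c = P ++ W.drop c' := by
      rw [hP]
      conv_lhs => rw [← take_append_drop (c' - c) (W.drop c)]
      congr 1
      rw [drop_drop]
      congr 1
      omega
    refine ⟨P, h' :: us, by simpa using hlen, ?_, ?_, ?_, hxP⟩
    · intro w hw
      rcases mem_cons.mp hw with rfl | hw
      · exact hPne
      · exact hne w hw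
    · exact isChain_cons_cons.mpr ⟨lt_of_ltAt_prefix hrel.2 hpre hxP, hch'⟩
    · rw [hdrop, hflat]
      simp

end Aux

/-- `W` is `n`-divisible: `W = v ++ u₁ ++ ⋯ ++ uₙ` with the nonempty words
`u₁ ≻ u₂ ≻ ⋯ ≻ uₙ` strictly lexicographically decreasing. -/
def IsNDivisible {α : Type*} [LinearOrder α] (n : ℕ) (W : List α) : Prop :=
  ∃ (v : List α) (us : List (List α)), us.length = n ∧ (∀ u ∈ us, u ≠ []) ∧
    W = v ++ us.flatten ∧ us.Chain' (fun a b => b < a)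

/-- Lemma: if `W` contains `n` pairwise disjoint occurrences of the same subword `u`
of length `n·d`, then `W` is `n`-divisible or contains a `d`-th power. -/
theorem stmt_2 {α : Type*} [Fintype α] [LinearOrder α] (n d : ℕ) (hn : 0 < n) (hd : 0 < d)
    (W : List α) (u : List α) (hu : u.length = n * d)
    (p : Fin n → ℕ) (hmono : StrictMono p)
    (hocc : ∀ i, (W.drop (p i)).take u.length = u ∧ p i + u.length ≤ W.length)
    (hdisj : ∀ i j : Fin n, i < j → p i + u.length ≤ p j) :
    IsNDivisible n W ∨ ∃ v : List α, v ≠ [] ∧ (List.replicate d v).flatten <:+: W := by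
  classical
  have hnnd : n ≤ n * d := Nat.le_mul_of_pos_right n hd
  have hpre : ∀ i : Fin n, u <+: W.drop (p i) := by
    intro i
    have h := (hocc i).1
    exact h ▸ take_prefix _ _
  by_cases hpc : ∃ a b : ℕ, a < b ∧ b < n ∧ u.drop b <+: u.drop a
  · right
    obtain ⟨a, b, hab, hbn, hpx⟩ := hpc
    set z : List α := u.drop a with hz
    have hzdrop : z.drop (b - a) = u.drop b := by
      rw [hz, drop_drop]
      congr 1
      omega
    have hzp : z.drop (b - a) <+: z := hzdrop ▸ hpx
    have hzlen : z.length = n * d - a := by rw [hz, length_drop, hu]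
    have hta : a < n * d := by omega
    have hdt : d * (b - a) ≤ z.length := by
      have h1 : d * (b - a) + d * a = d * b := by rw [← Nat.mul_add]; congr 1; omega
      have h2 : a ≤ d * a := Nat.le_mul_of_pos_left a hd
      have h3 : d * b + d = d * (b + 1) := by ring
      have h4 : d * (b + 1) ≤ d * n := Nat.mul_le_mul_left d (by omega)
      have h5 : d * n = n * d := Nat.mul_comm d n
      omega
    have hpow := pow_prefix_of_period d z (b - a) (by omega) hzp hdt
    have hzne : z ≠ [] := by
      intro h
      rw [h] at hzlen
      simp at hzlen
      omega
    refine ⟨z.take (b - a), ?_, ?_⟩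
    · intro h
      rcases take_eq_nil_iff.mp h with h' | h'
      · omega
      · exact hzne h'
    · have h1 : (List.replicate d (z.take (b - a))).flatten <:+: z := hpow.isInfix
      have h2 : z <:+: u := (drop_suffix a u).isInfix
      have h3 : u <:+: W := ((hpre ⟨0, hn⟩).isInfix).trans ((drop_suffix (p ⟨0, hn⟩) W).isInfix)
      exact (h1.trans h2).trans h3
  · left
    set r : ℕ → ℕ → Prop := fun s s' => u.drop s' ≤ u.drop s with hr
    haveI htot : IsTotal ℕ r := ⟨fun a b => (le_total (u.drop b) (u.drop a)).imp id id⟩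
    haveI htrans : IsTrans ℕ r := ⟨fun a b c h1 h2 => le_trans h2 h1⟩
    set ss : List ℕ := (List.range n).insertionSort r with hss
    have hperm : ss ~ List.range n := perm_insertionSort r _
    have hsorted : ss.Pairwise r := pairwise_insertionSort r _
    have hnodup : ss.Nodup := hperm.nodup_iff.mpr nodup_range
    have hlen : ss.length = n := by rw [hperm.length_eq, length_range]
    have hmemss : ∀ x ∈ ss, x < n := fun x hx => mem_range.mp (hperm.subset hx)
    set sf : ℕ → ℕ := fun i => ss.getD i 0 with hsfun
    have hsget : ∀ i, i < n → sf i ∈ ss := by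
      intro i hi
      have hi' : i < ss.length := by omega
      have : sf i = ss[i] := getD_eq_getElem ss 0 hi'
      rw [this]
      exact getElem_mem _
    have hslt : ∀ i, i < n → sf i < n := fun i hi => hmemss _ (hsget i hi)
    have hchain : ∀ i, i + 1 < n → LtAt (u.drop (sf (i + 1))) (u.drop (sf i)) := by
      intro i hi
      have hi1 : i < ss.length := by omega
      have hi2 : i + 1 < ss.length := by omega
      have hrle : r ss[i] ss[i + 1] :=
        (pairwise_iff_getElem.mp hsorted) i (i + 1) hi1 hi2 (by omega)
      have hsi : sf i = ss[i] := getD_eq_getElem ss 0 hi1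
      have hsi1 : sf (i + 1) = ss[i + 1] := getD_eq_getElem ss 0 hi2
      have hne : sf i ≠ sf (i + 1) := by
        rw [hsi, hsi1]
        intro h
        have := (hnodup.getElem_inj_iff).mp h
        omega
      have h1 : sf i < n := hslt i (by omega)
      have h2 : sf (i + 1) < n := hslt (i + 1) hi
      have hlt : u.drop (sf (i + 1)) < u.drop (sf i) := by
        have hrle' : u.drop (sf (i + 1)) ≤ u.drop (sf i) := by rw [hsi, hsi1]; exact hrle
        rcases lt_or_eq_of_le hrle' with h | h
        · exact h
        · exfalso
          apply hne
          have := congrArg List.length h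
          rw [length_drop, length_drop, hu] at this
          omega
      rcases ltAt_total (u.drop (sf (i + 1))) (u.drop (sf i)) with h | h | h | h
      · exact h
      · exact absurd (lt_of_ltAt_prefix h prefix_rfl prefix_rfl) (not_lt.mpr hlt.le)
      · exfalso
        rcases lt_trichotomy (sf i) (sf (i + 1)) with hlt' | heq | hlt'
        · exact hpc ⟨sf i, sf (i + 1), hlt', h2, h⟩
        · exact hne heq
        · have := h.length_le
          rw [length_drop, length_drop, hu] at this
          omega
      · exfalso
        rcases lt_trichotomy (sf i) (sf (i + 1)) with hlt' | heq | hlt'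
        · have := h.length_le
          rw [length_drop, length_drop, hu] at this
          omega
        · exact hne heq
        · exact hpc ⟨sf (i + 1), sf i, hlt', h1, h⟩
    set cf : Fin n → ℕ × List α := fun i => (p i + sf i.val, u.drop (sf i.val)) with hcf
    have hprf : ∀ i : Fin n, (cf i).2 ≠ [] ∧ (cf i).2 <+: W.drop (cf i).1 := by
      intro i
      constructor
      · intro h
        have := congrArg List.length h
        rw [length_drop, hu] at this
        simp at this
        have := hslt i.val i.isLt
        omega
      · have h1 : u.drop (sf i.val) <+: (W.drop (p i)).drop (sf i.val) := (hpre i).drop _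
        rw [drop_drop] at h1
        rw [hcf]
        simpa [Nat.add_comm] using h1
    have hLlen : (List.ofFn cf).length = n := by simp
    have hLne : (List.ofFn cf) ≠ [] := by
      intro h
      rw [h] at hLlen
      simp at hLlen
      omega
    have hmemL : ∀ e ∈ List.ofFn cf, e.2 ≠ [] ∧ e.2 <+: W.drop e.1 := by
      intro e he
      obtain ⟨i, rfl⟩ := mem_ofFn.mp he
      exact hprf i
    have hchainL : (List.ofFn cf).Chain' (fun e f => e.1 + e.2.length ≤ f.1 ∧ LtAt f.2 e.2) := by
      rw [List.Chain', isChain_iff_getElem]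
      intro i hi
      have hi1 : i < (List.ofFn cf).length := by omega
      have hi2 : i + 1 < (List.ofFn cf).length := by omega
      simp only [List.getElem_ofFn]
      have hin : i + 1 < n := by omega
      constructor
      · have hdj := hdisj ⟨i, by omega⟩ ⟨i + 1, hin⟩ (by simp [Fin.mk_lt_mk])
        rw [hu] at hdj
        have hsle : sf i ≤ n * d := by have := hslt i (by omega); omega
        simp only [hcf, length_drop, hu]
        omega
      · exact hchain i hin
    obtain ⟨e0, L', hL'⟩ := exists_cons_of_ne_nil hLne
    rw [hL'] at hchainL hmemL hLlen
    obtain ⟨h, us, hlen2, hne2, hch2, hflat2, -⟩ := build W L' e0.1 e0.2 hchainL hmemL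
    refine ⟨W.take e0.1, h :: us, ?_, hne2, ?_, hch2⟩
    · rw [hlen2]
      rw [length_cons] at hLlen
      omega
    · rw [← hflat2, take_append_drop]
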